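/- Let m, t, A be positive integers with t ≤ m and A + t + 1 ≤ 2m. Then Σ_{i=1}^{A} C(A, i) · C(2m−A−t−1, m−i−t) + Σ_{i=0}^{A−1} C(A, i) · C(2m−A−t−1, m−i) ≡ C(2m−t, m) + C(2m−A−t, m−t) (mod 2), where any binomial coefficient whose lower index is negative is interpreted as 0. -/

import Mathlib

/-- Binomial coefficient with integer lower index, interpreted as `0` when the
lower index is negative. -/
def intChoose (n : ℕ) (k : ℤ) : ℕ := if 0 ≤ k then n.choose k.toNat else 0

lemma vand (a n k M : ℕ) (h : a < M) :
    ∑ i ∈ Finset.range M, a.choose i * intChoose n ((k:ℤ) - i) = (a+n).choose k := by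
  have h1 : ∑ i ∈ Finset.range M, a.choose i * intChoose n ((k:ℤ) - i)
      = ∑ i ∈ Finset.range (max M (k+1)), a.choose i * intChoose n ((k:ℤ) - i) := by
    refine Finset.sum_subset (Finset.range_mono (le_max_left _ _)) ?_
    intro i _ hi
    simp only [Finset.mem_range, not_lt] at hi
    have : a.choose i = 0 := Nat.choose_eq_zero_of_lt (lt_of_lt_of_le h hi)
    simp [this]
  have h2 : ∑ i ∈ Finset.range (max M (k+1)), a.choose i * intChoose n ((k:ℤ) - i)
      = ∑ i ∈ Finset.range (k+1), a.choose i * intChoose n ((k:ℤ) - i) := by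
    refine (Finset.sum_subset (Finset.range_mono (le_max_right _ _)) ?_).symm
    intro i _ hi
    simp only [Finset.mem_range, not_lt] at hi
    have hneg : ¬ (0 ≤ (k:ℤ) - i) := by omega
    simp [intChoose, hneg]
    exact fun h => absurd h (by omega)
  rw [h1, h2, Nat.add_choose_eq, Finset.Nat.sum_antidiagonal_eq_sum_range_succ_mk]
  refine Finset.sum_congr rfl ?_
  intro i hi
  simp only [Finset.mem_range] at hi
  have h0 : (0:ℤ) ≤ (k:ℤ) - i := by omega
  have htn : ((k:ℤ) - i).toNat = k - i := by omega
  simp [intChoose, h0, htn]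
  exact fun h => absurd h (by omega)

/-- Part (1) of Proposition 2.5 (longprop), as a binomial-coefficient identity mod 2:
`Σ_{i=1}^{A} C(A,i)·C(2m-A-t-1, m-i-t) + Σ_{i=0}^{A-1} C(A,i)·C(2m-A-t-1, m-i)`
is congruent to `C(2m-t, m) + C(2m-A-t, m-t)` mod 2, where binomial coefficients
with negative lower index are interpreted as 0. -/
theorem stmt_3 (m t A : ℕ) (hm : 0 < m) (ht : 0 < t) (hA : 0 < A)
    (htm : t ≤ m) (hAt : A + t + 1 ≤ 2 * m) :
    (∑ i ∈ Finset.Icc 1 A,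
        Nat.choose A i * intChoose (2 * m - A - t - 1) ((m : ℤ) - i - t)) +
      (∑ i ∈ Finset.range A,
        Nat.choose A i * intChoose (2 * m - A - t - 1) ((m : ℤ) - i)) ≡
    Nat.choose (2 * m - t) m + Nat.choose (2 * m - A - t) (m - t) [MOD 2] := by
  set N := 2 * m - A - t - 1 with hN
  set S1 := ∑ i ∈ Finset.Icc 1 A, Nat.choose A i * intChoose N ((m : ℤ) - i - t) with hS1
  set S2 := ∑ i ∈ Finset.range A, Nat.choose A i * intChoose N ((m : ℤ) - i) with hS2
  have hcast : ((m - t : ℕ):ℤ) = (m:ℤ) - t := by omega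
  -- E1
  have e1 : intChoose N ((m:ℤ) - t) + S1 = (A + N).choose (m - t) := by
    have hv := vand A N (m - t) (A + 1) (Nat.lt_succ_self A)
    rw [Finset.sum_range_succ', hcast] at hv
    simp only [Nat.cast_zero, sub_zero, Nat.choose_zero_right, one_mul] at hv
    have hIcc : S1 = ∑ i ∈ Finset.range A,
        A.choose (i+1) * intChoose N ((m:ℤ) - ((i+1 : ℕ):ℤ) - (t:ℤ)) := by
      rw [hS1, show Finset.Icc 1 A = Finset.Ico 1 (A+1) by ext x; simp only [Finset.mem_Icc, Finset.mem_Ico]; omega,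
        Finset.sum_Ico_eq_sum_range]
      refine Finset.sum_congr (by simp) ?_
      intro i _
      rw [add_comm 1 i]
    have harg : ∀ i : ℕ, (m:ℤ) - (t:ℤ) - ((i+1 : ℕ):ℤ) = (m:ℤ) - ((i+1 : ℕ):ℤ) - (t:ℤ) := by
      intro i; ring
    simp only [harg] at hv
    rw [hIcc]
    omega
  -- E2
  have e2 : S2 + intChoose N ((m:ℤ) - A) = (A + N).choose m := by
    have hv := vand A N m (A + 1) (Nat.lt_succ_self A)
    rw [Finset.sum_range_succ, Nat.choose_self, one_mul] at hv
    exact hv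
  -- E3
  have e3 : (A + N).choose (m - t) + (A + N).choose m = (2 * m - t).choose m := by
    have hAN : A + N = 2 * m - t - 1 := by omega
    have hsym : (2 * m - t - 1).choose (m - t) = (2 * m - t - 1).choose (m - 1) := by
      have h1 : m - t ≤ 2 * m - t - 1 := by omega
      have h2 : 2 * m - t - 1 - (m - t) = m - 1 := by omega
      rw [← h2, Nat.choose_symm h1]
    have hn : 2 * m - t = (2 * m - t - 1) + 1 := by omega
    have hm4 : m = (m - 1) + 1 := by omega
    have hp : (2 * m - t).choose m
        = (2 * m - t - 1).choose (m - 1) + (2 * m - t - 1).choose m := by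
      calc (2 * m - t).choose m = ((2*m-t-1)+1).choose ((m-1)+1) := by rw [← hn, ← hm4]
        _ = (2*m-t-1).choose (m-1) + (2*m-t-1).choose ((m-1)+1) := Nat.choose_succ_succ _ _
        _ = (2*m-t-1).choose (m-1) + (2*m-t-1).choose m := by rw [← hm4]
    rw [hAN, hsym, hp]
  -- E4
  have e4 : intChoose N ((m:ℤ) - t) + intChoose N ((m:ℤ) - A) = (2 * m - A - t).choose (m - t) := by
    have hx : intChoose N ((m:ℤ) - t) = N.choose (m - t) := by
      have h0 : (0:ℤ) ≤ (m:ℤ) - t := by omega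
      have h1 : ((m:ℤ) - t).toNat = m - t := by omega
      simp [intChoose, h0, h1]
      exact fun h => absurd h (by omega)
    rcases Nat.eq_or_lt_of_le htm with heq | hlt
    · have hmt : m - t = 0 := by omega
      have hy : intChoose N ((m:ℤ) - A) = 0 := by
        have h0 : (0:ℤ) ≤ (m:ℤ) - A := by omega
        have h1 : ((m:ℤ) - A).toNat = m - A := by omega
        have h2 : N < m - A := by omega
        simp [intChoose, h0, h1, Nat.choose_eq_zero_of_lt h2]
      rw [hx, hy, hmt]
      simp
    · have hp : (2 * m - A - t).choose (m - t)
          = N.choose (m - t - 1) + N.choose (m - t) := by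
        have h3 : 2 * m - A - t = N + 1 := by omega
        have h4 : m - t = (m - t - 1) + 1 := by omega
        calc (2 * m - A - t).choose (m - t) = (N+1).choose ((m-t-1)+1) := by rw [← h3, ← h4]
          _ = N.choose (m-t-1) + N.choose ((m-t-1)+1) := Nat.choose_succ_succ _ _
          _ = N.choose (m-t-1) + N.choose (m-t) := by rw [← h4]
      rw [hp, hx]
      have hy : intChoose N ((m:ℤ) - A) = N.choose (m - t - 1) := by
        by_cases hAm : A ≤ m
        · have h0 : (0:ℤ) ≤ (m:ℤ) - A := by omega
          have h1 : ((m:ℤ) - A).toNat = m - A := by omega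
          have h2 : m - A ≤ N := by omega
          have h3 : N - (m - A) = m - t - 1 := by omega
          simp only [intChoose, if_pos h0, h1]
          rw [← h3, Nat.choose_symm h2]
        · have h0 : ¬ (0:ℤ) ≤ (m:ℤ) - A := by omega
          have h1 : N < m - t - 1 := by omega
          simp [intChoose, h0, Nat.choose_eq_zero_of_lt h1]
          exact fun h => absurd h hAm
      rw [hy]
      omega
  unfold Nat.ModEq
  omega
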